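/- Let G be a weighted graph with finite nonempty vertex subsets X, Y, Z, let p₁, p₂, ε ∈ (0,1], q₁ ∈ [0,p₁], q₂ ∈ [0,p₂]. Suppose (X,Y)_G satisfies DISC_≥(q₁, p₁, ε) and (Y,Z)_G satisfies DISC_≥(q₂, p₂, ε). Then the weighted bipartite graph G' on X × Z defined by G'(x,z) = E_{y∈Y}[G(x,y)G(y,z)] satisfies DISC_≥(q₁q₂, p₁p₂, 6√ε). -/

import Mathlib

/-- The one-sided discrepancy condition `DISC_≥(q, p, ε)` for a weighted bipartite graph
`G : X × Y → ℝ`. -/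
def DISCge {X Y : Type*} [Fintype X] [Fintype Y] (G : X → Y → ℝ) (q p ε : ℝ) : Prop :=
  ∀ u : X → ℝ, ∀ v : Y → ℝ, (∀ x, 0 ≤ u x ∧ u x ≤ 1) → (∀ y, 0 ≤ v y ∧ v y ≤ 1) →
    -(ε * p) ≤ (∑ x : X, ∑ y : Y, (G x y - q) * u x * v y) /
        ((Fintype.card X : ℝ) * (Fintype.card Y : ℝ))

/-- Deficit bound: if for every `[0,1]`-valued weight `w` on `B` the weighted discrepancy sum
is at least `-(ε p)|A||B|`, then the total deficit `∑_b (q ∑ u - ∑_a G a b * u a)₊` is at most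
`√ε · p · |A| · |B|`. -/
lemma deficit_bound {A B : Type*} [Fintype A] [Fintype B]
    (G : A → B → ℝ) (q p ε : ℝ) (hp : 0 < p) (hε : 0 ≤ ε)
    (hq0 : 0 ≤ q) (hqp : q ≤ p)
    (u : A → ℝ) (hu : ∀ a, 0 ≤ u a ∧ u a ≤ 1)
    (hG : ∀ a b, 0 ≤ G a b)
    (hcard : (Fintype.card A : ℝ) * (Fintype.card B : ℝ) ≠ 0)
    (hUcard : (∑ a : A, u a) ≤ (Fintype.card A : ℝ))
    (hd : ∀ w : B → ℝ, (∀ b, 0 ≤ w b ∧ w b ≤ 1) →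
      -((ε * p) * ((Fintype.card A : ℝ) * (Fintype.card B : ℝ))) ≤
        ∑ b : B, w b * (∑ a : A, (G a b - q) * u a)) :
    ∑ b : B, max (q * (∑ a : A, u a) - ∑ a : A, G a b * u a) 0 ≤
      Real.sqrt ε * p * (Fintype.card A : ℝ) * (Fintype.card B : ℝ) := by
  set U : ℝ := ∑ a : A, u a with hU
  set m : B → ℝ := fun b => max (q * U - ∑ a : A, G a b * u a) 0 with hm
  have hU0 : 0 ≤ U := Finset.sum_nonneg fun a _ => (hu a).1
  have hA0 : (0:ℝ) ≤ (Fintype.card A : ℝ) := Nat.cast_nonneg _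
  have hB0 : (0:ℝ) ≤ (Fintype.card B : ℝ) := Nat.cast_nonneg _
  have hm0 : ∀ b, 0 ≤ m b := fun b => le_max_right _ _
  have hα0 : ∀ b, 0 ≤ ∑ a : A, G a b * u a := fun b =>
    Finset.sum_nonneg fun a _ => mul_nonneg (hG a b) (hu a).1
  have hmle : ∀ b, m b ≤ q * U := by
    intro b
    refine max_le ?_ (mul_nonneg hq0 hU0)
    have := hα0 b
    linarith
  -- L² bound on the deficit
  have hsq : ∑ b : B, (m b)^2 ≤ ε * p * (q * U) *
      ((Fintype.card A : ℝ) * (Fintype.card B : ℝ)) := by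
    rcases eq_or_lt_of_le (mul_nonneg hq0 hU0) with hqU | hqU
    · have hz : ∀ b, m b = 0 := fun b =>
        le_antisymm (by rw [← hqU] at hmle; exact hmle b) (hm0 b)
      have hz2 : ∑ b : B, (m b)^2 = 0 :=
        Finset.sum_eq_zero fun b _ => by rw [hz b]; ring
      rw [hz2, ← hqU]
      simp
    · have hw : ∀ b, 0 ≤ m b / (q * U) ∧ m b / (q * U) ≤ 1 := by
        intro b
        constructor
        · exact div_nonneg (hm0 b) hqU.le
        · exact (div_le_one hqU).2 (hmle b)
      have key := hd (fun b => m b / (q * U)) hw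
      have hrw : ∀ b : B, (m b / (q * U)) * (∑ a : A, (G a b - q) * u a) =
          -((m b)^2 / (q * U)) := by
        intro b
        have hinner : ∑ a : A, (G a b - q) * u a = (∑ a : A, G a b * u a) - q * U := by
          rw [hU, Finset.mul_sum, ← Finset.sum_sub_distrib]
          exact Finset.sum_congr rfl fun a _ => by ring
        rw [hinner]
        rcases le_or_gt (q * U - ∑ a : A, G a b * u a) 0 with h | h
        · have : m b = 0 := max_eq_right h
          rw [this]; simp
        · have : m b = q * U - ∑ a : A, G a b * u a := max_eq_left h.le
          rw [this]; field_simp; ring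
      rw [Finset.sum_congr rfl fun b _ => hrw b] at key
      rw [Finset.sum_neg_distrib] at key
      have key2 : ∑ b : B, (m b)^2 / (q * U) ≤
          (ε * p) * ((Fintype.card A : ℝ) * (Fintype.card B : ℝ)) := by linarith
      have hcancel : (∑ b : B, (m b)^2 / (q * U)) * (q * U) = ∑ b : B, (m b)^2 := by
        rw [Finset.sum_mul]
        exact Finset.sum_congr rfl fun b _ => div_mul_cancel₀ _ hqU.ne'
      calc ∑ b : B, (m b)^2 = (∑ b : B, (m b)^2 / (q * U)) * (q * U) := hcancel.symm
        _ ≤ (ε * p) * ((Fintype.card A : ℝ) * (Fintype.card B : ℝ)) * (q * U) :=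
            mul_le_mul_of_nonneg_right key2 hqU.le
        _ = ε * p * (q * U) * ((Fintype.card A : ℝ) * (Fintype.card B : ℝ)) := by ring
  -- Cauchy–Schwarz
  have hcs : (∑ b : B, m b)^2 ≤ (Fintype.card B : ℝ) * ∑ b : B, (m b)^2 := by
    have := Finset.sum_mul_sq_le_sq_mul_sq Finset.univ (fun _ : B => (1:ℝ)) m
    simpa [Finset.card_univ] using this
  have hqUp : q * U ≤ p * (Fintype.card A : ℝ) :=
    mul_le_mul hqp hUcard hU0 hp.le
  have hfin : (∑ b : B, m b)^2 ≤
      ε * (p * (Fintype.card A : ℝ) * (Fintype.card B : ℝ))^2 := by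
    have h1 : ε * p * (q * U) * ((Fintype.card A : ℝ) * (Fintype.card B : ℝ)) ≤
        ε * p * (p * (Fintype.card A : ℝ)) * ((Fintype.card A : ℝ) * (Fintype.card B : ℝ)) := by
      have h0 : 0 ≤ ε * p * ((Fintype.card A : ℝ) * (Fintype.card B : ℝ)) := by positivity
      calc ε * p * (q * U) * ((Fintype.card A : ℝ) * (Fintype.card B : ℝ))
          = (q * U) * (ε * p * ((Fintype.card A : ℝ) * (Fintype.card B : ℝ))) := by ring
        _ ≤ (p * (Fintype.card A : ℝ)) *
            (ε * p * ((Fintype.card A : ℝ) * (Fintype.card B : ℝ))) :=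
            mul_le_mul_of_nonneg_right hqUp h0
        _ = ε * p * (p * (Fintype.card A : ℝ)) *
            ((Fintype.card A : ℝ) * (Fintype.card B : ℝ)) := by ring
    have h2 : (Fintype.card B : ℝ) * (∑ b : B, (m b)^2) ≤
        (Fintype.card B : ℝ) *
          (ε * p * (p * (Fintype.card A : ℝ)) * ((Fintype.card A : ℝ) * (Fintype.card B : ℝ))) :=
      mul_le_mul_of_nonneg_left (hsq.trans h1) hB0
    calc (∑ b : B, m b)^2 ≤ (Fintype.card B : ℝ) * ∑ b : B, (m b)^2 := hcs
      _ ≤ (Fintype.card B : ℝ) *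
          (ε * p * (p * (Fintype.card A : ℝ)) * ((Fintype.card A : ℝ) * (Fintype.card B : ℝ))) := h2
      _ = ε * (p * (Fintype.card A : ℝ) * (Fintype.card B : ℝ))^2 := by ring
  have hsum0 : 0 ≤ ∑ b : B, m b := Finset.sum_nonneg fun b _ => hm0 b
  have hrhs0 : 0 ≤ p * (Fintype.card A : ℝ) * (Fintype.card B : ℝ) := by positivity
  have := Real.sqrt_le_sqrt hfin
  rw [Real.sqrt_sq hsum0, Real.sqrt_mul hε, Real.sqrt_sq hrhs0] at this
  calc ∑ b : B, m b ≤ Real.sqrt ε * (p * (Fintype.card A : ℝ) * (Fintype.card B : ℝ)) := this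
    _ = Real.sqrt ε * p * (Fintype.card A : ℝ) * (Fintype.card B : ℝ) := by ring

set_option maxHeartbeats 2000000 in
theorem stmt_8 {X Y Z : Type*} [Fintype X] [Fintype Y] [Fintype Z]
    [Nonempty X] [Nonempty Y] [Nonempty Z]
    (GXY : X → Y → ℝ) (GYZ : Y → Z → ℝ)
    (hXY01 : ∀ x y, 0 ≤ GXY x y ∧ GXY x y ≤ 1)
    (hYZ01 : ∀ y z, 0 ≤ GYZ y z ∧ GYZ y z ≤ 1)
    (p₁ p₂ ε q₁ q₂ : ℝ) (hp₁ : 0 < p₁) (hp₁1 : p₁ ≤ 1) (hp₂ : 0 < p₂) (hp₂1 : p₂ ≤ 1)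
    (hε : 0 < ε) (hε1 : ε ≤ 1) (hq₁0 : 0 ≤ q₁) (hq₁ : q₁ ≤ p₁) (hq₂0 : 0 ≤ q₂) (hq₂ : q₂ ≤ p₂)
    (hd1 : DISCge GXY q₁ p₁ ε) (hd2 : DISCge GYZ q₂ p₂ ε) :
    DISCge (fun x z => (∑ y : Y, GXY x y * GYZ y z) / (Fintype.card Y : ℝ))
      (q₁ * q₂) (p₁ * p₂) (6 * Real.sqrt ε) := by
  intro u v hu hv
  set N : ℝ := (Fintype.card X : ℝ) with hNdef
  set M : ℝ := (Fintype.card Y : ℝ) with hMdef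
  set K : ℝ := (Fintype.card Z : ℝ) with hKdef
  have hN : 0 < N := by rw [hNdef]; exact_mod_cast (Fintype.card_pos : 0 < Fintype.card X)
  have hM : 0 < M := by rw [hMdef]; exact_mod_cast (Fintype.card_pos : 0 < Fintype.card Y)
  have hK : 0 < K := by rw [hKdef]; exact_mod_cast (Fintype.card_pos : 0 < Fintype.card Z)
  set U : ℝ := ∑ x : X, u x with hUdef
  set V : ℝ := ∑ z : Z, v z with hVdef
  set α : Y → ℝ := fun y => ∑ x : X, GXY x y * u x with hαdef
  set β : Y → ℝ := fun y => ∑ z : Z, GYZ y z * v z with hβdef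
  set m : Y → ℝ := fun y => max (q₁ * U - α y) 0 with hmdef
  set n : Y → ℝ := fun y => max (q₂ * V - β y) 0 with hndef
  have hU0 : 0 ≤ U := Finset.sum_nonneg fun x _ => (hu x).1
  have hV0 : 0 ≤ V := Finset.sum_nonneg fun z _ => (hv z).1
  have hUN : U ≤ N := by
    calc U ≤ ∑ _x : X, (1:ℝ) := Finset.sum_le_sum fun x _ => (hu x).2
      _ = N := by simp [hNdef]
  have hVK : V ≤ K := by
    calc V ≤ ∑ _z : Z, (1:ℝ) := Finset.sum_le_sum fun z _ => (hv z).2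
      _ = K := by simp [hKdef]
  -- deficit bound for GXY
  have hm_bound : ∑ y : Y, m y ≤ Real.sqrt ε * p₁ * N * M := by
    apply deficit_bound GXY q₁ p₁ ε hp₁ hε.le hq₁0 hq₁ u hu (fun x y => (hXY01 x y).1)
      (by positivity) hUN
    intro w hw
    have key := hd1 u w hu hw
    rw [le_div_iff₀ (by positivity : (0:ℝ) < N * M)] at key
    calc -(ε * p₁ * (N * M)) = -(ε * p₁) * (N * M) := by ring
      _ ≤ ∑ x : X, ∑ y : Y, (GXY x y - q₁) * u x * w y := key
      _ = ∑ y : Y, w y * ∑ x : X, (GXY x y - q₁) * u x := by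
          rw [Finset.sum_comm]
          refine Finset.sum_congr rfl fun y _ => ?_
          rw [Finset.mul_sum]
          exact Finset.sum_congr rfl fun x _ => by ring
  -- deficit bound for GYZ (with roles of arguments swapped)
  have hn_bound : ∑ y : Y, n y ≤ Real.sqrt ε * p₂ * K * M := by
    apply deficit_bound (fun z y => GYZ y z) q₂ p₂ ε hp₂ hε.le hq₂0 hq₂ v hv
      (fun z y => (hYZ01 y z).1) (by positivity) hVK
    intro w hw
    have key := hd2 w v hw hv
    rw [le_div_iff₀ (by positivity : (0:ℝ) < M * K)] at key
    calc -(ε * p₂ * (K * M)) = -(ε * p₂) * (M * K) := by ring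
      _ ≤ ∑ y : Y, ∑ z : Z, (GYZ y z - q₂) * w y * v z := key
      _ = ∑ y : Y, w y * ∑ z : Z, (GYZ y z - q₂) * v z := by
          refine Finset.sum_congr rfl fun y _ => ?_
          rw [Finset.mul_sum]
          exact Finset.sum_congr rfl fun z _ => by ring
  -- pointwise lower bound
  have hα0 : ∀ y, 0 ≤ α y := fun y =>
    Finset.sum_nonneg fun x _ => mul_nonneg (hXY01 x y).1 (hu x).1
  have hβ0 : ∀ y, 0 ≤ β y := fun y =>
    Finset.sum_nonneg fun z _ => mul_nonneg (hYZ01 y z).1 (hv z).1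
  have hpoint : ∀ y : Y, (q₁ * U - m y) * (q₂ * V - n y) ≤ α y * β y := by
    intro y
    have h1 : q₁ * U - m y ≤ α y := by
      have : q₁ * U - α y ≤ m y := le_max_left _ _
      linarith
    have h2 : q₂ * V - n y ≤ β y := by
      have : q₂ * V - β y ≤ n y := le_max_left _ _
      linarith
    have h3 : 0 ≤ q₂ * V - n y := by
      have : n y ≤ q₂ * V := max_le (by linarith [hβ0 y]) (mul_nonneg hq₂0 hV0)
      linarith
    exact mul_le_mul h1 h2 h3 (hα0 y)
  -- main lower bound on ∑ α β
  have hmain : q₁ * q₂ * U * V * M - q₁ * U * (∑ y : Y, n y) - q₂ * V * (∑ y : Y, m y)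
      ≤ ∑ y : Y, α y * β y := by
    have hsum : ∑ y : Y, (q₁ * U - m y) * (q₂ * V - n y) ≤ ∑ y : Y, α y * β y :=
      Finset.sum_le_sum fun y _ => hpoint y
    have hexp : ∑ y : Y, (q₁ * U - m y) * (q₂ * V - n y) =
        q₁ * q₂ * U * V * M - q₁ * U * (∑ y : Y, n y) - q₂ * V * (∑ y : Y, m y)
          + ∑ y : Y, m y * n y := by
      rw [Finset.sum_congr rfl (fun y _ => by ring :
        ∀ y ∈ Finset.univ, (q₁ * U - m y) * (q₂ * V - n y) =
          q₁ * U * (q₂ * V) - q₁ * U * n y - q₂ * V * m y + m y * n y)]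
      rw [Finset.sum_add_distrib, Finset.sum_sub_distrib, Finset.sum_sub_distrib,
        Finset.sum_const, ← Finset.mul_sum, ← Finset.mul_sum, Finset.card_univ,
        nsmul_eq_mul]
      rw [hMdef]
      ring
    have hmn : 0 ≤ ∑ y : Y, m y * n y :=
      Finset.sum_nonneg fun y _ => mul_nonneg (le_max_right _ _) (le_max_right _ _)
    linarith
  -- bound the two error terms
  have hmS0 : 0 ≤ ∑ y : Y, m y := Finset.sum_nonneg fun y _ => le_max_right _ _
  have hnS0 : 0 ≤ ∑ y : Y, n y := Finset.sum_nonneg fun y _ => le_max_right _ _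
  have hq₁U : q₁ * U ≤ p₁ * N := mul_le_mul hq₁ hUN hU0 hp₁.le
  have hq₂V : q₂ * V ≤ p₂ * K := mul_le_mul hq₂ hVK hV0 hp₂.le
  have hq₁U0 : 0 ≤ q₁ * U := mul_nonneg hq₁0 hU0
  have hq₂V0 : 0 ≤ q₂ * V := mul_nonneg hq₂0 hV0
  have he1 : q₁ * U * (∑ y : Y, n y) ≤ p₁ * N * (Real.sqrt ε * p₂ * K * M) :=
    mul_le_mul hq₁U hn_bound hnS0 (by positivity)
  have he2 : q₂ * V * (∑ y : Y, m y) ≤ p₂ * K * (Real.sqrt ε * p₁ * N * M) :=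
    mul_le_mul hq₂V hm_bound hmS0 (by positivity)
  have hT : q₁ * q₂ * U * V * M - 2 * Real.sqrt ε * p₁ * p₂ * N * M * K
      ≤ ∑ y : Y, α y * β y := by nlinarith
  -- identify the goal sum
  have e3 : ∑ x : X, ∑ z : Z, ∑ y : Y, GXY x y * GYZ y z * u x * v z
      = ∑ y : Y, α y * β y := by
    have e3a : ∀ x : X, ∑ z : Z, ∑ y : Y, GXY x y * GYZ y z * u x * v z
        = ∑ y : Y, ∑ z : Z, GXY x y * GYZ y z * u x * v z := fun x => by
      rw [Finset.sum_comm]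
    rw [Finset.sum_congr rfl fun x _ => e3a x, Finset.sum_comm]
    refine Finset.sum_congr rfl fun y _ => ?_
    simp only [hαdef, hβdef]
    rw [Finset.sum_mul_sum]
    exact Finset.sum_congr rfl fun x _ => Finset.sum_congr rfl fun z _ => by ring
  have hS : ∑ x : X, ∑ z : Z, ((∑ y : Y, GXY x y * GYZ y z) / M - q₁ * q₂) * u x * v z
      = (∑ y : Y, α y * β y) / M - q₁ * q₂ * (U * V) := by
    have e1 : ∀ (x : X) (z : Z), ((∑ y : Y, GXY x y * GYZ y z) / M - q₁ * q₂) * u x * v z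
        = (∑ y : Y, GXY x y * GYZ y z * u x * v z) / M - q₁ * q₂ * (u x * v z) := by
      intro x z
      have h : ∑ y : Y, GXY x y * GYZ y z * u x * v z
          = (∑ y : Y, GXY x y * GYZ y z) * (u x * v z) := by
        rw [Finset.sum_mul]
        exact Finset.sum_congr rfl fun y _ => by ring
      rw [h]
      field_simp
    have eA : ∑ x : X, ∑ z : Z, (∑ y : Y, GXY x y * GYZ y z * u x * v z) / M
        = (∑ y : Y, α y * β y) / M := by
      rw [← e3, Finset.sum_div]
      exact Finset.sum_congr rfl fun x _ => by rw [Finset.sum_div]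
    have eB : ∑ x : X, ∑ z : Z, q₁ * q₂ * (u x * v z) = q₁ * q₂ * (U * V) := by
      have h : ∑ x : X, ∑ z : Z, q₁ * q₂ * (u x * v z)
          = ∑ x : X, ∑ z : Z, (q₁ * q₂ * u x) * v z :=
        Finset.sum_congr rfl fun x _ => Finset.sum_congr rfl fun z _ => by ring
      rw [h, ← Fintype.sum_mul_sum, ← Finset.mul_sum, ← hUdef, ← hVdef]
      ring
    rw [Finset.sum_congr rfl fun x _ => Finset.sum_congr rfl fun z _ => e1 x z]
    have esplit : ∑ x : X, ∑ z : Z,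
        ((∑ y : Y, GXY x y * GYZ y z * u x * v z) / M - q₁ * q₂ * (u x * v z))
        = (∑ x : X, ∑ z : Z, (∑ y : Y, GXY x y * GYZ y z * u x * v z) / M)
          - ∑ x : X, ∑ z : Z, q₁ * q₂ * (u x * v z) := by
      rw [← Finset.sum_sub_distrib]
      exact Finset.sum_congr rfl fun x _ => Finset.sum_sub_distrib _ _
    rw [esplit, eA, eB]
  -- finish
  show -(6 * Real.sqrt ε * (p₁ * p₂)) ≤
    (∑ x : X, ∑ z : Z, ((∑ y : Y, GXY x y * GYZ y z) / M - q₁ * q₂) * u x * v z) / (N * K)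
  rw [hS, le_div_iff₀ (by positivity : (0:ℝ) < N * K)]
  have hdiv : q₁ * q₂ * U * V - 2 * Real.sqrt ε * p₁ * p₂ * N * K
      ≤ (∑ y : Y, α y * β y) / M := by
    rw [le_div_iff₀ hM]
    nlinarith [hT]
  have h4 : 0 ≤ Real.sqrt ε * p₁ * p₂ * N * K := by positivity
  nlinarith [hdiv, h4]
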